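/- For nonempty compact metric spaces (X,d), (X',d') with Borel probability measures μ, μ', the Gromov–Hausdorff–Prokhorov distance admits the characterization: d_GHP((X,d,μ),(X',d',μ')) = inf{ε > 0 : there exist a coupling ν of μ and μ' and a compact correspondence ℛ between X and X' such that ν(ℛ) ≥ 1 − ε and (1/2)·dis ℛ ≤ ε}. -/

import Mathlib

open MeasureTheory Set

section GHP

variable {X Y : Type*}

/-- A "glue metric": a metric on the disjoint union `X ⊕ Y` whose restrictions to `X`
and `Y` coincide with the given metrics. -/
structure IsGlueMetric [MetricSpace X] [MetricSpace Y] (δ : X ⊕ Y → X ⊕ Y → ℝ) : Prop where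
  refl : ∀ a, δ a a = 0
  pos : ∀ a b, a ≠ b → 0 < δ a b
  symm : ∀ a b, δ a b = δ b a
  triangle : ∀ a b c, δ a c ≤ δ a b + δ b c
  restr_left : ∀ x x' : X, δ (Sum.inl x) (Sum.inl x') = dist x x'
  restr_right : ∀ y y' : Y, δ (Sum.inr y) (Sum.inr y') = dist y y'

/-- The Hausdorff distance, in `(X ⊕ Y, δ)`, between (the images of) `X` and `Y`:
the infimum of `ε > 0` such that each space is contained in the open `ε`-neighborhood
of the other. -/
noncomputable def glueHausdorffDist (δ : X ⊕ Y → X ⊕ Y → ℝ) : ℝ :=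
  sInf {ε : ℝ | 0 < ε ∧ (∀ x : X, ∃ y : Y, δ (Sum.inl x) (Sum.inr y) < ε) ∧
    (∀ y : Y, ∃ x : X, δ (Sum.inl x) (Sum.inr y) < ε)}

/-- The Prokhorov distance, in `(X ⊕ Y, δ)`, between the pushforwards of `μ` and `ν`:
the infimum of `ε > 0` such that `μ(C) ≤ ν(C^ε) + ε` for every `δ`-closed set `C`,
where `C^ε` is the open `ε`-neighborhood for `δ`. -/
noncomputable def glueProkhorovDist [MeasurableSpace X] [MeasurableSpace Y]
    (δ : X ⊕ Y → X ⊕ Y → ℝ) (μ : Measure X) (ν : Measure Y) : ℝ :=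
  sInf {ε : ℝ | 0 < ε ∧ ∀ C : Set (X ⊕ Y),
    (∀ a ∉ C, ∃ η > 0, ∀ b ∈ C, η ≤ δ a b) →
    μ (Sum.inl ⁻¹' C) ≤ ν (Sum.inr ⁻¹' {a | ∃ b ∈ C, δ a b < ε}) + ENNReal.ofReal ε}

/-- The Gromov–Hausdorff–Prokhorov distance between two metric spaces equipped with
Borel measures: the infimum, over all metrics `δ` on the disjoint union restricting to
the given metrics, of the maximum of the Hausdorff distance between the two spaces and
the Prokhorov distance between the pushforward measures. -/
noncomputable def ghpDist [MetricSpace X] [MetricSpace Y]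
    [MeasurableSpace X] [MeasurableSpace Y] (μ : Measure X) (ν : Measure Y) : ℝ :=
  sInf {r : ℝ | ∃ δ : X ⊕ Y → X ⊕ Y → ℝ, IsGlueMetric δ ∧
    r = max (glueHausdorffDist δ) (glueProkhorovDist δ μ ν)}

end GHP

section Corr

variable {X Y : Type*}

/-- A correspondence between `X` and `Y`: a relation whose projections to both factors
are surjective. -/
def IsCorrespondence (R : Set (X × Y)) : Prop :=
  (∀ x : X, ∃ y : Y, (x, y) ∈ R) ∧ (∀ y : Y, ∃ x : X, (x, y) ∈ R)

/-- The distortion of a correspondence. -/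
noncomputable def distortion [MetricSpace X] [MetricSpace Y] (R : Set (X × Y)) : ℝ :=
  sSup {r : ℝ | ∃ p ∈ R, ∃ q ∈ R, r = |dist p.1 q.1 - dist p.2 q.2|}

/-- A coupling of `μ` and `μ'`: a measure on the product with the given marginals. -/
def IsCoupling [MeasurableSpace X] [MeasurableSpace Y]
    (ν : Measure (X × Y)) (μ : Measure X) (μ' : Measure Y) : Prop :=
  Measure.map Prod.fst ν = μ ∧ Measure.map Prod.snd ν = μ'

end Corr


section DiscreteStrassen
open Finset



theorem nat_strassen {I J : Type*} [Fintype I] [Fintype J] [DecidableEq I] [DecidableEq J]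
    (p : I → ℕ) (q : J → ℕ) (S : I → J → Prop) [∀ i j, Decidable (S i j)]
    (h : ∀ A : Finset I, ∑ i ∈ A, p i ≤ ∑ j ∈ univ.filter (fun j => ∃ i ∈ A, S i j), q j) :
    ∃ m : I → J → ℕ, (∀ i, ∑ j, m i j = p i) ∧ (∀ j, ∑ i, m i j ≤ q j) ∧
      (∀ i j, m i j ≠ 0 → S i j) := by
  classical
  set t : (Σ i : I, Fin (p i)) → Finset (Σ j : J, Fin (q j)) :=
    fun x => univ.filter (fun c => S x.1 c.1) with ht
  have hall : ∀ s : Finset (Σ i : I, Fin (p i)), #s ≤ #(s.biUnion t) := by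
    intro s
    set A : Finset I := s.image Sigma.fst with hA
    have h1 : #s ≤ ∑ i ∈ A, p i := by
      have hsub : s ⊆ A.sigma (fun i => (univ : Finset (Fin (p i)))) := by
        intro x hx
        simp only [Finset.mem_sigma, Finset.mem_univ, and_true, hA]
        exact Finset.mem_image_of_mem Sigma.fst hx
      calc #s ≤ #(A.sigma (fun i => (univ : Finset (Fin (p i))))) := Finset.card_le_card hsub
        _ = ∑ i ∈ A, p i := by rw [Finset.card_sigma]; simp
    have h2 : (univ.filter (fun j => ∃ i ∈ A, S i j)).sigma
        (fun j => (univ : Finset (Fin (q j)))) ⊆ s.biUnion t := by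
      intro c hc
      simp only [Finset.mem_sigma, Finset.mem_filter, Finset.mem_univ, true_and, and_true] at hc
      obtain ⟨i, hiA, hiS⟩ := hc
      rw [hA] at hiA
      obtain ⟨x, hxs, hx1⟩ := Finset.mem_image.mp hiA
      refine Finset.mem_biUnion.mpr ⟨x, hxs, ?_⟩
      simp only [ht, Finset.mem_filter, Finset.mem_univ, true_and, hx1]
      exact hiS
    have h3 : ∑ j ∈ univ.filter (fun j => ∃ i ∈ A, S i j), q j ≤ #(s.biUnion t) := by
      calc ∑ j ∈ univ.filter (fun j => ∃ i ∈ A, S i j), q j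
          = #((univ.filter (fun j => ∃ i ∈ A, S i j)).sigma
              (fun j => (univ : Finset (Fin (q j))))) := by rw [Finset.card_sigma]; simp
        _ ≤ #(s.biUnion t) := Finset.card_le_card h2
    exact le_trans h1 (le_trans (h A) h3)
  obtain ⟨f, hfinj, hft⟩ := (Finset.all_card_le_biUnion_card_iff_exists_injective t).mp hall
  refine ⟨fun i j => #(univ.filter (fun k : Fin (p i) => (f ⟨i, k⟩).1 = j)), ?_, ?_, ?_⟩
  · intro i
    rw [← Finset.card_eq_sum_card_fiberwise (f := fun k : Fin (p i) => (f ⟨i, k⟩).1)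
      (fun x _ => Finset.mem_univ _)]
    simp
  · intro j
    set T : Finset (Σ i : I, Fin (p i)) := univ.filter (fun x => (f x).1 = j) with hT
    have key : ∑ i, #(univ.filter (fun k : Fin (p i) => (f ⟨i, k⟩).1 = j)) = #T := by
      rw [Finset.card_eq_sum_card_fiberwise (f := Sigma.fst) (s := T) (t := univ)
        (fun x _ => Finset.mem_univ _)]
      apply Finset.sum_congr rfl
      intro i _
      have heq : T.filter (fun x => x.1 = i)
          = (univ.filter (fun k : Fin (p i) => (f ⟨i, k⟩).1 = j)).map
              (Function.Embedding.sigmaMk i) := by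
        ext x
        rcases x with ⟨i', k⟩
        simp only [hT, Finset.mem_filter, Finset.mem_univ, true_and, Finset.mem_map,
          Function.Embedding.sigmaMk_apply]
        constructor
        · rintro ⟨hfj, rfl⟩
          exact ⟨k, hfj, rfl⟩
        · rintro ⟨k', hk', hkk⟩
          obtain ⟨rfl, hk2⟩ := Sigma.mk.inj_iff.mp hkk
          cases eq_of_heq hk2
          exact ⟨hk', rfl⟩
      rw [heq, Finset.card_map]
    rw [key]
    have himg : T.image f ⊆ univ.filter (fun c : (Σ j : J, Fin (q j)) => c.1 = j) := by
      intro c hc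
      obtain ⟨x, hx, rfl⟩ := Finset.mem_image.mp hc
      simp only [hT, Finset.mem_filter, Finset.mem_univ, true_and] at hx ⊢
      exact hx
    have hcardimg : #T = #(T.image f) := (Finset.card_image_of_injective T hfinj).symm
    have hqj : #(univ.filter (fun c : (Σ j : J, Fin (q j)) => c.1 = j)) = q j := by
      have : (univ.filter (fun c : (Σ j : J, Fin (q j)) => c.1 = j))
          = ({j} : Finset J).sigma (fun j' => (univ : Finset (Fin (q j')))) := by
        ext c
        simp [eq_comm]
      rw [this, Finset.card_sigma]
      simp
    rw [hcardimg, ← hqj]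
    exact Finset.card_le_card himg
  · intro i j hm
    obtain ⟨k, hk⟩ := Finset.Nonempty.exists_mem (Finset.card_ne_zero.mp hm)
    simp only [Finset.mem_filter, Finset.mem_univ, true_and] at hk
    have hf := hft ⟨i, k⟩
    simp only [ht, Finset.mem_filter, Finset.mem_univ, true_and] at hf
    rwa [hk] at hf



theorem real_substrassen {I J : Type*} [Fintype I] [Fintype J] [DecidableEq I] [DecidableEq J]
    (p : I → ℝ) (q : J → ℝ) (hp : ∀ i, 0 ≤ p i) (hq : ∀ j, 0 ≤ q j)
    (S : I → J → Prop) [∀ i j, Decidable (S i j)] (α : ℝ) (hα : 0 ≤ α)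
    (h : ∀ A : Finset I, ∑ i ∈ A, p i ≤ (∑ j ∈ univ.filter (fun j => ∃ i ∈ A, S i j), q j) + α)
    (ε : ℝ) (hε : 0 < ε) :
    ∃ m : I → J → ℝ, (∀ i j, 0 ≤ m i j) ∧ (∀ i, ∑ j, m i j ≤ p i) ∧
      (∀ j, ∑ i, m i j ≤ q j) ∧ (∀ i j, m i j ≠ 0 → S i j) ∧
      (∑ i, p i) - α - ε ≤ ∑ i, ∑ j, m i j := by
  classical
  set c : ℝ := (Fintype.card I + Fintype.card J + 1 : ℝ) with hc
  have hc0 : 0 < c := by positivity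
  obtain ⟨N, hN⟩ := exists_nat_gt (c / ε)
  have hN0 : (0 : ℝ) < N := lt_of_le_of_lt (div_nonneg hc0.le hε.le) hN
  have hNe : c / N ≤ ε := by
    rw [div_le_iff₀ hN0]
    calc c = (c / ε) * ε := by field_simp
      _ ≤ N * ε := by gcongr
      _ = ε * N := mul_comm _ _
  set P : I → ℕ := fun i => ⌊(N : ℝ) * p i⌋₊ with hP
  set Q : Option J → ℕ := fun oj =>
    oj.elim (⌈(N : ℝ) * α⌉₊ + Fintype.card J) (fun j => ⌊(N : ℝ) * q j⌋₊) with hQ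
  set S' : I → Option J → Prop := fun i oj => oj.elim True (S i) with hS'
  have hyp : ∀ A : Finset I, ∑ i ∈ A, P i ≤
      ∑ oj ∈ univ.filter (fun oj => ∃ i ∈ A, S' i oj), Q oj := by
    intro A
    rcases A.eq_empty_or_nonempty with rfl | hAne
    · simp
    rw [← Nat.cast_le (α := ℝ), Nat.cast_sum, Nat.cast_sum]
    have step1 : (∑ i ∈ A, (P i : ℝ)) ≤ (N : ℝ) * ∑ i ∈ A, p i := by
      rw [Finset.mul_sum]
      apply Finset.sum_le_sum
      intro i _
      exact Nat.floor_le (mul_nonneg hN0.le (hp i))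
    have step2 : (N : ℝ) * ∑ i ∈ A, p i ≤
        (∑ j ∈ univ.filter (fun j => ∃ i ∈ A, S i j), (N : ℝ) * q j) + (N : ℝ) * α := by
      rw [← Finset.mul_sum, ← mul_add]
      exact mul_le_mul_of_nonneg_left (h A) hN0.le
    have step3 : (∑ j ∈ univ.filter (fun j => ∃ i ∈ A, S i j), (N : ℝ) * q j) + (N : ℝ) * α ≤
        (∑ j ∈ univ.filter (fun j => ∃ i ∈ A, S i j), ((⌊(N : ℝ) * q j⌋₊ : ℝ) + 1))
          + (⌈(N : ℝ) * α⌉₊ : ℝ) := by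
      gcongr with j hj
      · exact (Nat.lt_floor_add_one _).le
      · exact Nat.le_ceil _
    have step4 : (∑ j ∈ univ.filter (fun j => ∃ i ∈ A, S i j), ((⌊(N : ℝ) * q j⌋₊ : ℝ) + 1))
          + (⌈(N : ℝ) * α⌉₊ : ℝ) ≤
        ∑ oj ∈ univ.filter (fun oj => ∃ i ∈ A, S' i oj), (Q oj : ℝ) := by
      have hsplit : ∑ oj ∈ univ.filter (fun oj => ∃ i ∈ A, S' i oj), (Q oj : ℝ)
          = (Q none : ℝ) + ∑ j ∈ univ.filter (fun j => ∃ i ∈ A, S i j), (Q (some j) : ℝ) := by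
        rw [Finset.sum_filter, Fintype.sum_option, Finset.sum_filter]
        congr 1
        · simp only [hS', Option.elim]
          rw [if_pos]
          obtain ⟨i, hi⟩ := hAne
          exact ⟨i, hi, trivial⟩
        · simp only [hS', Option.elim]
      rw [hsplit]
      simp only [hQ, Option.elim]
      rw [Finset.sum_add_distrib]
      push_cast
      have hfle : (∑ j ∈ univ.filter (fun j => ∃ i ∈ A, S i j), (1 : ℝ))
          ≤ (Fintype.card J : ℝ) := by
        rw [Finset.sum_const, nsmul_eq_mul, mul_one]
        exact_mod_cast Finset.card_le_card (Finset.filter_subset _ _) |>.trans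
          (le_of_eq (Finset.card_univ))
      linarith
    calc (∑ i ∈ A, (P i : ℝ)) ≤ _ := step1
      _ ≤ _ := step2
      _ ≤ _ := step3
      _ ≤ _ := step4
  obtain ⟨n, hrow, hcol, hsupp⟩ := nat_strassen P Q S' hyp
  refine ⟨fun i j => (n i (some j) : ℝ) / N, ?_, ?_, ?_, ?_, ?_⟩
  · intro i j; positivity
  · intro i
    rw [← Finset.sum_div, div_le_iff₀ hN0]
    have hnat : ∑ j, n i (some j) ≤ P i := by
      rw [← hrow i, Fintype.sum_option (f := n i)]
      exact Nat.le_add_left _ _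
    have h1 : ∑ j, (n i (some j) : ℝ) ≤ (P i : ℝ) := by exact_mod_cast hnat
    calc ∑ j, (n i (some j) : ℝ) ≤ (P i : ℝ) := h1
      _ ≤ (N : ℝ) * p i := Nat.floor_le (mul_nonneg hN0.le (hp i))
      _ = p i * N := mul_comm _ _
  · intro j
    rw [← Finset.sum_div, div_le_iff₀ hN0]
    have h1 : ∑ i, (n i (some j) : ℝ) ≤ (Q (some j) : ℝ) := by
      exact_mod_cast hcol (some j)
    calc ∑ i, (n i (some j) : ℝ) ≤ (Q (some j) : ℝ) := h1
      _ ≤ (N : ℝ) * q j := Nat.floor_le (mul_nonneg hN0.le (hq j))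
      _ = q j * N := mul_comm _ _
  · intro i j hm
    apply hsupp i (some j)
    intro hz
    exact hm (by simp [hz])
  · -- total mass bound
    have key : ∀ i, (P i : ℝ) - (n i none : ℝ) = ∑ j, (n i (some j) : ℝ) := by
      intro i
      have := hrow i
      rw [Fintype.sum_option (f := n i)] at this
      have : ((n i none : ℕ) : ℝ) + ∑ j, (n i (some j) : ℝ) = (P i : ℝ) := by
        rw [← Nat.cast_sum, ← Nat.cast_add, this]
      linarith
    have hup : ∑ i, (n i none : ℝ) ≤ (Q none : ℝ) := by
      rw [← Nat.cast_sum, Nat.cast_le]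
      exact hcol none
    have hQnone : (Q none : ℝ) ≤ (N : ℝ) * α + 1 + Fintype.card J := by
      simp only [hQ, Option.elim]
      push_cast
      have := Nat.ceil_lt_add_one (by positivity : (0:ℝ) ≤ (N : ℝ) * α)
      linarith
    have hPlow : ∀ i, (N : ℝ) * p i - 1 ≤ (P i : ℝ) := by
      intro i
      have := Nat.lt_floor_add_one ((N : ℝ) * p i)
      simp only [hP]
      linarith
    have hsum : ∑ i, ∑ j, (n i (some j) : ℝ) / N
        = (∑ i, ∑ j, (n i (some j) : ℝ)) / N := by
      rw [Finset.sum_div]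
      apply Finset.sum_congr rfl
      intro i _
      rw [Finset.sum_div]
    rw [hsum, le_div_iff₀ hN0]
    have expand : ∑ i, ∑ j, (n i (some j) : ℝ)
        = (∑ i, (P i : ℝ)) - ∑ i, (n i none : ℝ) := by
      rw [← Finset.sum_sub_distrib]
      exact (Finset.sum_congr rfl fun i _ => (key i).symm)
    rw [expand]
    have hfloor : (N : ℝ) * (∑ i, p i) - Fintype.card I ≤ ∑ i, (P i : ℝ) := by
      rw [Finset.mul_sum]
      calc (∑ i, (N : ℝ) * p i) - Fintype.card I
          = ∑ i, ((N : ℝ) * p i - 1) := by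
            rw [Finset.sum_sub_distrib, Finset.sum_const, nsmul_eq_mul, mul_one,
              Finset.card_univ]
        _ ≤ ∑ i, (P i : ℝ) := Finset.sum_le_sum fun i _ => hPlow i
    have hcN : c / N * N = c := by field_simp
    have hεN : c ≤ ε * N := by
      calc c = c / N * N := hcN.symm
        _ ≤ ε * N := by gcongr
    calc ((∑ i, p i) - α - ε) * N
        = (N : ℝ) * (∑ i, p i) - (N * α) - ε * N := by ring
      _ ≤ (N : ℝ) * (∑ i, p i) - (N * α) - c := by linarith
      _ = ((N : ℝ) * (∑ i, p i) - Fintype.card I) - ((N : ℝ) * α + 1 + Fintype.card J) := by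
          rw [hc]; ring
      _ ≤ (∑ i, (P i : ℝ)) - ∑ i, (n i none : ℝ) := by
          have := hQnone
          have := hup
          linarith [hfloor]
end DiscreteStrassen



theorem exists_fine_partition {Z : Type*} [MetricSpace Z] [CompactSpace Z] [Nonempty Z]
    [MeasurableSpace Z] [BorelSpace Z] (θ : ℝ) (hθ : 0 < θ) :
    ∃ (n : ℕ) (z : Fin n → Z) (A : Fin n → Set Z),
      (∀ i, MeasurableSet (A i)) ∧ (∀ i, A i ⊆ Metric.ball (z i) θ) ∧
      (Pairwise (Function.onFun Disjoint A)) ∧ (⋃ i, A i) = Set.univ := by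
  classical
  obtain ⟨t, -, htfin, htcov⟩ := finite_cover_balls_of_compact (isCompact_univ : IsCompact (Set.univ : Set Z)) hθ
  set s := htfin.toFinset with hs
  set n := s.card with hn
  set z : Fin n → Z := fun i => (s.equivFin.symm i : Z) with hz
  set A : Fin n → Set Z :=
    fun i => Metric.ball (z i) θ \ ⋃ (k : Fin n) (_ : k < i), Metric.ball (z k) θ with hA
  refine ⟨n, z, A, ?_, ?_, ?_, ?_⟩
  · intro i
    exact (measurableSet_ball).diff
      (MeasurableSet.iUnion fun k => MeasurableSet.iUnion fun _ => measurableSet_ball)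
  · intro i
    exact Set.diff_subset
  · intro i j hij
    rcases lt_or_gt_of_ne hij with hlt | hlt
    · refine Set.disjoint_left.mpr fun x hxi hxj => ?_
      exact hxj.2 (Set.mem_iUnion.mpr ⟨i, Set.mem_iUnion.mpr ⟨hlt, hxi.1⟩⟩)
    · refine Set.disjoint_left.mpr fun x hxi hxj => ?_
      exact hxi.2 (Set.mem_iUnion.mpr ⟨j, Set.mem_iUnion.mpr ⟨hlt, hxj.1⟩⟩)
  · apply Set.eq_univ_of_forall
    intro x
    have hx : ∃ i : Fin n, x ∈ Metric.ball (z i) θ := by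
      have := htcov (Set.mem_univ x)
      simp only [Set.mem_iUnion] at this
      obtain ⟨c, hct, hxc⟩ := this
      have hcs : c ∈ s := htfin.mem_toFinset.mpr hct
      refine ⟨s.equivFin ⟨c, hcs⟩, ?_⟩
      have : z (s.equivFin ⟨c, hcs⟩) = c := by
        simp only [hz, Equiv.symm_apply_apply]
      rwa [this]
    set F := (Finset.univ.filter (fun i : Fin n => x ∈ Metric.ball (z i) θ)) with hF
    have hFne : F.Nonempty := by
      obtain ⟨i, hi⟩ := hx
      exact ⟨i, Finset.mem_filter.mpr ⟨Finset.mem_univ _, hi⟩⟩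
    set i₀ := F.min' hFne with hi₀
    have hxi₀ : x ∈ Metric.ball (z i₀) θ :=
      (Finset.mem_filter.mp (F.min'_mem hFne)).2
    refine Set.mem_iUnion.mpr ⟨i₀, hxi₀, ?_⟩
    intro hmem
    obtain ⟨k, hk⟩ := Set.mem_iUnion.mp hmem
    obtain ⟨hklt, hxk⟩ := Set.mem_iUnion.mp hk
    have : i₀ ≤ k := F.min'_le k (Finset.mem_filter.mpr ⟨Finset.mem_univ _, hxk⟩)
    exact absurd hklt (not_lt.mpr this)


theorem exists_coupling_ge {X Y : Type*} [MeasurableSpace X] [MeasurableSpace Y]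
    (μ : Measure X) (μ' : Measure Y) [IsProbabilityMeasure μ] [IsProbabilityMeasure μ']
    (ρ : Measure (X × Y)) (h1 : ρ.map Prod.fst ≤ μ) (h2 : ρ.map Prod.snd ≤ μ') :
    ∃ ν : Measure (X × Y), ν.map Prod.fst = μ ∧ ν.map Prod.snd = μ' ∧ ρ ≤ ν := by
  set ρ₁ := ρ.map Prod.fst with hρ₁
  set ρ₂ := ρ.map Prod.snd with hρ₂
  haveI : IsFiniteMeasure ρ₁ :=
    ⟨lt_of_le_of_lt (Measure.le_iff'.mp h1 Set.univ) (measure_lt_top μ _)⟩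
  haveI : IsFiniteMeasure ρ₂ :=
    ⟨lt_of_le_of_lt (Measure.le_iff'.mp h2 Set.univ) (measure_lt_top μ' _)⟩
  set ξ := μ - ρ₁ with hξ
  set ξ' := μ' - ρ₂ with hξ'
  haveI : IsFiniteMeasure ξ := ⟨lt_of_le_of_lt
    (Measure.le_iff'.mp (Measure.sub_le (μ := μ) (ν := ρ₁)) Set.univ) (measure_lt_top μ _)⟩
  haveI : IsFiniteMeasure ξ' := ⟨lt_of_le_of_lt
    (Measure.le_iff'.mp (Measure.sub_le (μ := μ') (ν := ρ₂)) Set.univ) (measure_lt_top μ' _)⟩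
  set β := ξ' Set.univ with hβ
  have hβ' : ξ Set.univ = β := by
    rw [hβ, hξ, hξ', Measure.sub_apply MeasurableSet.univ h1,
      Measure.sub_apply MeasurableSet.univ h2]
    congr 1
    · simp
    · rw [hρ₁, hρ₂, Measure.map_apply measurable_fst MeasurableSet.univ,
        Measure.map_apply measurable_snd MeasurableSet.univ]
      simp
  set ν := ρ + β⁻¹ • (ξ.prod ξ') with hν
  have hβtop : β ≠ ⊤ := (measure_lt_top ξ' _).ne
  have key1 : ν.map Prod.fst = μ := by
    rw [hν, Measure.map_add _ _ measurable_fst, Measure.map_smul, Measure.map_fst_prod]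
    rcases eq_or_ne β 0 with hb0 | hb0
    · have hξ0 : ξ = 0 := Measure.measure_univ_eq_zero.mp (hβ'.trans hb0)
      have hρ₁μ : ρ.map Prod.fst = μ := by
        have h := Measure.sub_add_cancel_of_le h1
        rw [← hξ, hξ0, zero_add] at h
        exact h
      rw [hξ0, smul_zero, smul_zero, add_zero]
      exact hρ₁μ
    · rw [← hβ, smul_smul, ENNReal.inv_mul_cancel hb0 hβtop, one_smul]
      have h := Measure.sub_add_cancel_of_le h1
      rw [← hξ] at h
      rw [add_comm]
      exact h
  have key2 : ν.map Prod.snd = μ' := by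
    rw [hν, Measure.map_add _ _ measurable_snd, Measure.map_smul, Measure.map_snd_prod]
    rcases eq_or_ne β 0 with hb0 | hb0
    · have hξ0 : ξ' = 0 := Measure.measure_univ_eq_zero.mp (hβ ▸ hb0)
      have hρ₂μ : ρ.map Prod.snd = μ' := by
        have h := Measure.sub_add_cancel_of_le h2
        rw [← hξ', hξ0, zero_add] at h
        exact h
      rw [hξ0, smul_zero, smul_zero, add_zero]
      exact hρ₂μ
    · rw [hβ', smul_smul, ENNReal.inv_mul_cancel hb0 hβtop, one_smul]
      have h := Measure.sub_add_cancel_of_le h2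
      rw [← hξ'] at h
      rw [add_comm]
      exact h
  refine ⟨ν, key1, key2, ?_⟩
  rw [hν]
  exact Measure.le_iff'.mpr fun s => by simp


theorem spread_subcoupling {X Y : Type*} [MeasurableSpace X] [MeasurableSpace Y]
    (μ : Measure X) (μ' : Measure Y) [IsFiniteMeasure μ] [IsFiniteMeasure μ']
    {nX nY : ℕ} (A : Fin nX → Set X) (B : Fin nY → Set Y)
    (hA : ∀ i, MeasurableSet (A i)) (hB : ∀ j, MeasurableSet (B j))
    (hAd : Pairwise (Function.onFun Disjoint A)) (hAc : (⋃ i, A i) = Set.univ)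
    (hBd : Pairwise (Function.onFun Disjoint B)) (hBc : (⋃ j, B j) = Set.univ)
    (m : Fin nX → Fin nY → ℝ) (hm0 : ∀ i j, 0 ≤ m i j)
    (hrow : ∀ i, ∑ j, m i j ≤ (μ (A i)).toReal)
    (hcol : ∀ j, ∑ i, m i j ≤ (μ' (B j)).toReal)
    (R : Set (X × Y)) (hR : ∀ i j, m i j ≠ 0 → A i ×ˢ B j ⊆ R) :
    ∃ ρ : Measure (X × Y), ρ.map Prod.fst ≤ μ ∧ ρ.map Prod.snd ≤ μ' ∧
      ENNReal.ofReal (∑ i, ∑ j, m i j) ≤ ρ R := by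
  classical
  set c : Fin nX → Fin nY → ENNReal :=
    fun i j => ENNReal.ofReal (m i j) / (μ (A i) * μ' (B j)) with hc
  set ξ : Fin nX → Fin nY → Measure (X × Y) :=
    fun i j => (μ.restrict (A i)).prod (μ'.restrict (B j)) with hξ
  set ρ : Measure (X × Y) := ∑ i, ∑ j, c i j • ξ i j with hρ
  have hρapp : ∀ s : Set (X × Y), ρ s = ∑ i, ∑ j, c i j * ξ i j s := by
    intro s
    rw [hρ, Measure.finset_sum_apply]
    apply Finset.sum_congr rfl
    intro i _
    rw [Measure.finset_sum_apply]
    apply Finset.sum_congr rfl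
    intro j _
    rw [Measure.smul_apply, smul_eq_mul]
  have hpAfin : ∀ i, μ (A i) ≠ ⊤ := fun i => (measure_lt_top μ _).ne
  have hqBfin : ∀ j, μ' (B j) ≠ ⊤ := fun j => (measure_lt_top μ' _).ne
  have hne : ∀ i j, m i j ≠ 0 → μ (A i) ≠ 0 ∧ μ' (B j) ≠ 0 := by
    intro i j hm
    have hpos : 0 < m i j := lt_of_le_of_ne (hm0 i j) (Ne.symm hm)
    constructor
    · intro h0
      have h1 : m i j ≤ ∑ j', m i j' :=
        Finset.single_le_sum (fun j' _ => hm0 i j') (Finset.mem_univ j)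
      have := hrow i
      rw [h0] at this
      simp at this
      linarith
    · intro h0
      have h1 : m i j ≤ ∑ i', m i' j :=
        Finset.single_le_sum (fun i' _ => hm0 i' j) (Finset.mem_univ i)
      have := hcol j
      rw [h0] at this
      simp at this
      linarith
  -- key bound : c i j * μ' (B j) ≤ ofReal (m i j) / μ (A i)
  have hkey1 : ∀ i j, c i j * μ' (B j) ≤ ENNReal.ofReal (m i j) / μ (A i) := by
    intro i j
    rcases eq_or_ne (m i j) 0 with hm | hm
    · simp [hc, hm]
    obtain ⟨hp0, hq0⟩ := hne i j hm
    simp only [hc]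
    rw [div_eq_mul_inv, ENNReal.mul_inv (Or.inl hp0) (Or.inr hq0), ← mul_assoc,
      mul_assoc (ENNReal.ofReal (m i j) * (μ (A i))⁻¹), ENNReal.inv_mul_cancel hq0 (hqBfin j),
      mul_one, ← div_eq_mul_inv]
  have hkey2 : ∀ i j, c i j * μ (A i) ≤ ENNReal.ofReal (m i j) / μ' (B j) := by
    intro i j
    rcases eq_or_ne (m i j) 0 with hm | hm
    · simp [hc, hm]
    obtain ⟨hp0, hq0⟩ := hne i j hm
    simp only [hc]
    rw [mul_comm (μ (A i)) (μ' (B j))]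
    rw [div_eq_mul_inv, ENNReal.mul_inv (Or.inl hq0) (Or.inr hp0), ← mul_assoc,
      mul_assoc (ENNReal.ofReal (m i j) * (μ' (B j))⁻¹), ENNReal.inv_mul_cancel hp0 (hpAfin i),
      mul_one, ← div_eq_mul_inv]
  have hsum1 : ∀ i, ∑ j, (ENNReal.ofReal (m i j) / μ (A i)) ≤ 1 := by
    intro i
    have : ∑ j, (ENNReal.ofReal (m i j) / μ (A i))
        = (∑ j, ENNReal.ofReal (m i j)) / μ (A i) := by
      simp only [div_eq_mul_inv]
      rw [Finset.sum_mul]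
    rw [this, ← ENNReal.ofReal_sum_of_nonneg (fun j _ => hm0 i j)]
    calc ENNReal.ofReal (∑ j, m i j) / μ (A i)
        ≤ μ (A i) / μ (A i) := by
          apply ENNReal.div_le_div_right
          calc ENNReal.ofReal (∑ j, m i j) ≤ ENNReal.ofReal ((μ (A i)).toReal) :=
            ENNReal.ofReal_le_ofReal (hrow i)
          _ = μ (A i) := ENNReal.ofReal_toReal (hpAfin i)
      _ ≤ 1 := ENNReal.div_self_le_one
  have hsum2 : ∀ j, ∑ i, (ENNReal.ofReal (m i j) / μ' (B j)) ≤ 1 := by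
    intro j
    have : ∑ i, (ENNReal.ofReal (m i j) / μ' (B j))
        = (∑ i, ENNReal.ofReal (m i j)) / μ' (B j) := by
      simp only [div_eq_mul_inv]
      rw [Finset.sum_mul]
    rw [this, ← ENNReal.ofReal_sum_of_nonneg (fun i _ => hm0 i j)]
    calc ENNReal.ofReal (∑ i, m i j) / μ' (B j)
        ≤ μ' (B j) / μ' (B j) := by
          apply ENNReal.div_le_div_right
          calc ENNReal.ofReal (∑ i, m i j) ≤ ENNReal.ofReal ((μ' (B j)).toReal) :=
            ENNReal.ofReal_le_ofReal (hcol j)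
          _ = μ' (B j) := ENNReal.ofReal_toReal (hqBfin j)
      _ ≤ 1 := ENNReal.div_self_le_one
  refine ⟨ρ, ?_, ?_, ?_⟩
  · -- first marginal
    rw [Measure.le_iff]
    intro s hs
    rw [Measure.map_apply measurable_fst hs]
    have hpre : Prod.fst ⁻¹' s = s ×ˢ (Set.univ : Set Y) := by
      ext p; simp
    rw [hpre, hρapp]
    have hval : ∀ i j, ξ i j (s ×ˢ (Set.univ : Set Y)) = μ (s ∩ A i) * μ' (B j) := by
      intro i j
      rw [hξ]
      rw [Measure.prod_prod, Measure.restrict_apply hs, Measure.restrict_apply MeasurableSet.univ,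
        Set.univ_inter]
    calc ∑ i, ∑ j, c i j * ξ i j (s ×ˢ (Set.univ : Set Y))
        = ∑ i, ∑ j, μ (s ∩ A i) * (c i j * μ' (B j)) := by
          apply Finset.sum_congr rfl; intro i _
          apply Finset.sum_congr rfl; intro j _
          rw [hval]; ring
      _ ≤ ∑ i, ∑ j, μ (s ∩ A i) * (ENNReal.ofReal (m i j) / μ (A i)) := by
          apply Finset.sum_le_sum; intro i _
          apply Finset.sum_le_sum; intro j _
          exact mul_le_mul_right (hkey1 i j) _
      _ = ∑ i, μ (s ∩ A i) * ∑ j, (ENNReal.ofReal (m i j) / μ (A i)) := by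
          apply Finset.sum_congr rfl; intro i _
          rw [Finset.mul_sum]
      _ ≤ ∑ i, μ (s ∩ A i) * 1 := by
          apply Finset.sum_le_sum; intro i _
          exact mul_le_mul_right (hsum1 i) _
      _ = ∑ i, μ (s ∩ A i) := by simp
      _ = μ s := by
          rw [← tsum_fintype (L := SummationFilter.unconditional _), ← measure_iUnion (fun i j hij =>
              ((hAd hij).mono inter_subset_right inter_subset_right))
            (fun i => hs.inter (hA i)), ← Set.inter_iUnion, hAc, Set.inter_univ]
  · -- second marginal
    rw [Measure.le_iff]
    intro s hs
    rw [Measure.map_apply measurable_snd hs]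
    have hpre : Prod.snd ⁻¹' s = (Set.univ : Set X) ×ˢ s := by
      ext p; simp
    rw [hpre, hρapp]
    have hval : ∀ i j, ξ i j ((Set.univ : Set X) ×ˢ s) = μ (A i) * μ' (s ∩ B j) := by
      intro i j
      rw [hξ]
      rw [Measure.prod_prod, Measure.restrict_apply hs, Measure.restrict_apply MeasurableSet.univ,
        Set.univ_inter]
    calc ∑ i, ∑ j, c i j * ξ i j ((Set.univ : Set X) ×ˢ s)
        = ∑ j, ∑ i, μ' (s ∩ B j) * (c i j * μ (A i)) := by
          rw [Finset.sum_comm]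
          apply Finset.sum_congr rfl; intro j _
          apply Finset.sum_congr rfl; intro i _
          rw [hval]; ring
      _ ≤ ∑ j, ∑ i, μ' (s ∩ B j) * (ENNReal.ofReal (m i j) / μ' (B j)) := by
          apply Finset.sum_le_sum; intro j _
          apply Finset.sum_le_sum; intro i _
          exact mul_le_mul_right (hkey2 i j) _
      _ = ∑ j, μ' (s ∩ B j) * ∑ i, (ENNReal.ofReal (m i j) / μ' (B j)) := by
          apply Finset.sum_congr rfl; intro j _
          rw [Finset.mul_sum]
      _ ≤ ∑ j, μ' (s ∩ B j) * 1 := by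
          apply Finset.sum_le_sum; intro j _
          exact mul_le_mul_right (hsum2 j) _
      _ = ∑ j, μ' (s ∩ B j) := by simp
      _ = μ' s := by
          rw [← tsum_fintype (L := SummationFilter.unconditional _), ← measure_iUnion (fun i j hij =>
              ((hBd hij).mono inter_subset_right inter_subset_right))
            (fun j => hs.inter (hB j)), ← Set.inter_iUnion, hBc, Set.inter_univ]
  · -- mass on R
    rw [hρapp]
    rw [ENNReal.ofReal_sum_of_nonneg (fun i _ => Finset.sum_nonneg (fun j _ => hm0 i j))]
    apply Finset.sum_le_sum
    intro i _
    rw [ENNReal.ofReal_sum_of_nonneg (fun j _ => hm0 i j)]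
    apply Finset.sum_le_sum
    intro j _
    rcases eq_or_ne (m i j) 0 with hm | hm
    · simp [hm]
    obtain ⟨hp0, hq0⟩ := hne i j hm
    have hprod : ξ i j (A i ×ˢ B j) = μ (A i) * μ' (B j) := by
      rw [hξ]
      rw [Measure.prod_prod, Measure.restrict_apply_self, Measure.restrict_apply_self]
    calc ENNReal.ofReal (m i j)
        = c i j * (μ (A i) * μ' (B j)) := by
          simp only [hc]
          rw [ENNReal.div_mul_cancel (mul_ne_zero hp0 hq0)
            (ENNReal.mul_ne_top (hpAfin i) (hqBfin j))]
      _ = c i j * ξ i j (A i ×ˢ B j) := by rw [hprod]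
      _ ≤ c i j * ξ i j R := mul_le_mul_right (measure_mono (hR i j hm)) _

section GlueBasics

variable {X Y : Type*} [MetricSpace X] [MetricSpace Y]

theorem IsGlueMetric.nonneg {δ : X ⊕ Y → X ⊕ Y → ℝ} (hδ : IsGlueMetric δ) (a b : X ⊕ Y) :
    0 ≤ δ a b := by
  have h1 := hδ.triangle a b a
  have h2 := hδ.refl a
  have h3 := hδ.symm a b
  linarith

theorem IsGlueMetric.cross_sub_le {δ : X ⊕ Y → X ⊕ Y → ℝ} (hδ : IsGlueMetric δ)
    (x x' : X) (y y' : Y) :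
    δ (Sum.inl x) (Sum.inr y) ≤ dist x x' + δ (Sum.inl x') (Sum.inr y') + dist y' y := by
  have h1 := hδ.triangle (Sum.inl x) (Sum.inl x') (Sum.inr y)
  have h2 := hδ.triangle (Sum.inl x') (Sum.inr y') (Sum.inr y)
  have h3 := hδ.restr_left x x'
  have h4 := hδ.restr_right y' y
  linarith

theorem IsGlueMetric.continuous_cross {δ : X ⊕ Y → X ⊕ Y → ℝ} (hδ : IsGlueMetric δ) :
    Continuous (fun p : X × Y => δ (Sum.inl p.1) (Sum.inr p.2)) := by
  apply (LipschitzWith.of_dist_le_mul (K := 2) ?_).continuous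
  intro p q
  rw [Real.dist_eq]
  have h1 := hδ.cross_sub_le p.1 q.1 p.2 q.2
  have h2 := hδ.cross_sub_le q.1 p.1 q.2 p.2
  have h3 : dist p.1 q.1 ≤ dist p q := le_max_left _ _
  have h4 : dist p.2 q.2 ≤ dist p q := le_max_right _ _
  have h5 : dist q.1 p.1 = dist p.1 q.1 := dist_comm _ _
  have h6 : dist q.2 p.2 = dist p.2 q.2 := dist_comm _ _
  rw [abs_le]
  push_cast
  constructor <;> linarith

theorem IsGlueMetric.continuous_left {δ : X ⊕ Y → X ⊕ Y → ℝ} (hδ : IsGlueMetric δ)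
    (a : X ⊕ Y) : Continuous (fun x : X => δ a (Sum.inl x)) := by
  apply (LipschitzWith.of_dist_le_mul (K := 1) ?_).continuous
  intro x x'
  rw [Real.dist_eq]
  have h1 := hδ.triangle a (Sum.inl x') (Sum.inl x)
  have h2 := hδ.triangle a (Sum.inl x) (Sum.inl x')
  have h3 := hδ.restr_left x x'
  have h4 := hδ.restr_left x' x
  rw [abs_le]
  rw [dist_comm x' x] at h4
  push_cast
  constructor <;> [linarith; linarith]

theorem IsGlueMetric.continuous_right {δ : X ⊕ Y → X ⊕ Y → ℝ} (hδ : IsGlueMetric δ)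
    (a : X ⊕ Y) : Continuous (fun y : Y => δ a (Sum.inr y)) := by
  apply (LipschitzWith.of_dist_le_mul (K := 1) ?_).continuous
  intro y y'
  rw [Real.dist_eq]
  have h1 := hδ.triangle a (Sum.inr y') (Sum.inr y)
  have h2 := hδ.triangle a (Sum.inr y) (Sum.inr y')
  have h3 := hδ.restr_right y y'
  have h4 := hδ.restr_right y' y
  rw [abs_le]
  rw [dist_comm y' y] at h4
  push_cast
  constructor <;> [linarith; linarith]

theorem glueHausdorffDist_nonneg {δ : X ⊕ Y → X ⊕ Y → ℝ} : 0 ≤ glueHausdorffDist δ :=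
  Real.sInf_nonneg fun _ hx => hx.1.le

theorem glueProkhorovDist_nonneg [MeasurableSpace X] [MeasurableSpace Y]
    {δ : X ⊕ Y → X ⊕ Y → ℝ} {μ : Measure X} {ν : Measure Y} :
    0 ≤ glueProkhorovDist δ μ ν :=
  Real.sInf_nonneg fun _ hx => hx.1.le

theorem glueHausdorff_set_nonempty [CompactSpace X] [CompactSpace Y] [Nonempty X] [Nonempty Y]
    {δ : X ⊕ Y → X ⊕ Y → ℝ} (hδ : IsGlueMetric δ) :
    {ε : ℝ | 0 < ε ∧ (∀ x : X, ∃ y : Y, δ (Sum.inl x) (Sum.inr y) < ε) ∧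
      (∀ y : Y, ∃ x : X, δ (Sum.inl x) (Sum.inr y) < ε)}.Nonempty := by
  obtain ⟨x₀⟩ := ‹Nonempty X›
  obtain ⟨y₀⟩ := ‹Nonempty Y›
  set M := Metric.diam (Set.univ : Set X) + δ (Sum.inl x₀) (Sum.inr y₀) +
    Metric.diam (Set.univ : Set Y) with hM
  have hbound : ∀ (x : X) (y : Y), δ (Sum.inl x) (Sum.inr y) ≤ M := by
    intro x y
    have h1 := hδ.cross_sub_le x x₀ y y₀
    have h2 : dist x x₀ ≤ Metric.diam (Set.univ : Set X) :=
      Metric.dist_le_diam_of_mem (Metric.isBounded_of_compactSpace) trivial trivial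
    have h3 : dist y₀ y ≤ Metric.diam (Set.univ : Set Y) :=
      Metric.dist_le_diam_of_mem (Metric.isBounded_of_compactSpace) trivial trivial
    linarith
  have hM0 : 0 ≤ M := le_trans (hδ.nonneg _ _) (hbound x₀ y₀)
  refine ⟨M + 1, by linarith, fun x => ⟨y₀, by linarith [hbound x y₀]⟩,
    fun y => ⟨x₀, by linarith [hbound x₀ y]⟩⟩

end GlueBasics

section DirA

open Metric

theorem dirA {X Y : Type*} [MetricSpace X] [MetricSpace Y]
    [CompactSpace X] [CompactSpace Y] [Nonempty X] [Nonempty Y]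
    [MeasurableSpace X] [BorelSpace X] [MeasurableSpace Y] [BorelSpace Y]
    (μ : Measure X) (μ' : Measure Y) [IsProbabilityMeasure μ] [IsProbabilityMeasure μ']
    (ε : ℝ) (hε : 0 < ε) (ν : Measure (X × Y)) (hcoup : IsCoupling ν μ μ')
    (R : Set (X × Y)) (hRcorr : IsCorrespondence R)
    (hνR : ENNReal.ofReal (1 - ε) ≤ ν R) (hRmeas : MeasurableSet R)
    (hdis : distortion R / 2 ≤ ε) :
    ∃ δ : X ⊕ Y → X ⊕ Y → ℝ, IsGlueMetric δ ∧
      max (glueHausdorffDist δ) (glueProkhorovDist δ μ μ') ≤ ε := by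
  classical
  obtain ⟨x₀⟩ := ‹Nonempty X›
  obtain ⟨y₀, hx₀y₀⟩ := hRcorr.1 x₀
  have hRne : R.Nonempty := ⟨(x₀, y₀), hx₀y₀⟩
  have hdis2 : ∀ p ∈ R, ∀ q ∈ R, |dist p.1 q.1 - dist p.2 q.2| ≤ 2 * ε := by
    intro p hp q hq
    have hmem : |dist p.1 q.1 - dist p.2 q.2| ∈
        {r : ℝ | ∃ p ∈ R, ∃ q ∈ R, r = |dist p.1 q.1 - dist p.2 q.2|} :=
      ⟨p, hp, q, hq, rfl⟩
    have hbdd : BddAbove {r : ℝ | ∃ p ∈ R, ∃ q ∈ R, r = |dist p.1 q.1 - dist p.2 q.2|} := by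
      refine ⟨Metric.diam (Set.univ : Set X) + Metric.diam (Set.univ : Set Y), ?_⟩
      rintro r ⟨p, hp, q, hq, rfl⟩
      have h1 : dist p.1 q.1 ≤ Metric.diam (Set.univ : Set X) :=
        Metric.dist_le_diam_of_mem Metric.isBounded_of_compactSpace trivial trivial
      have h2 : dist p.2 q.2 ≤ Metric.diam (Set.univ : Set Y) :=
        Metric.dist_le_diam_of_mem Metric.isBounded_of_compactSpace trivial trivial
      have h3 := dist_nonneg (x := p.1) (y := q.1)
      have h4 := dist_nonneg (x := p.2) (y := q.2)
      rw [abs_le]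
      constructor <;> linarith
    have hle : |dist p.1 q.1 - dist p.2 q.2| ≤ distortion R := le_csSup hbdd hmem
    linarith [hdis]
  set F : X → Y → ℝ :=
    fun x y => sInf ((fun pq : X × Y => dist x pq.1 + ε + dist pq.2 y) '' R) with hF
  have himgne : ∀ (x : X) (y : Y),
      ((fun pq : X × Y => dist x pq.1 + ε + dist pq.2 y) '' R).Nonempty :=
    fun x y => hRne.image _
  have hbddbelow : ∀ (x : X) (y : Y),
      BddBelow ((fun pq : X × Y => dist x pq.1 + ε + dist pq.2 y) '' R) := by
    intro x y
    refine ⟨0, ?_⟩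
    rintro r ⟨pq, _, rfl⟩
    have := dist_nonneg (x := x) (y := pq.1)
    have := dist_nonneg (x := pq.2) (y := y)
    simp only
    linarith
  have hFle : ∀ (x : X) (y : Y) (a : X) (b : Y), (a, b) ∈ R →
      F x y ≤ dist x a + ε + dist b y := by
    intro x y a b hab
    exact csInf_le (hbddbelow x y) ⟨(a, b), hab, rfl⟩
  have hFge : ∀ (x : X) (y : Y), ε ≤ F x y := by
    intro x y
    apply le_csInf (himgne x y)
    rintro r ⟨pq, _, rfl⟩
    have := dist_nonneg (x := x) (y := pq.1)
    have := dist_nonneg (x := pq.2) (y := y)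
    simp only
    linarith
  have tri1 : ∀ (x x' : X) (y : Y), F x y ≤ dist x x' + F x' y := by
    intro x x' y
    have h : F x y - dist x x' ≤ F x' y := by
      apply le_csInf (himgne x' y)
      rintro r ⟨⟨a, b⟩, hab, rfl⟩
      have h1 := hFle x y a b hab
      have h2 := dist_triangle x x' a
      simp only
      linarith
    linarith
  have tri2 : ∀ (x : X) (y y' : Y), F x y ≤ F x y' + dist y' y := by
    intro x y y'
    have h : F x y - dist y' y ≤ F x y' := by
      apply le_csInf (himgne x y')
      rintro r ⟨⟨a, b⟩, hab, rfl⟩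
      have h1 := hFle x y a b hab
      have h2 := dist_triangle b y' y
      simp only
      linarith
    linarith
  have tri3 : ∀ (x x' : X) (y : Y), dist x x' ≤ F x y + F x' y := by
    intro x x' y
    have h : dist x x' - F x y ≤ F x' y := by
      apply le_csInf (himgne x' y)
      rintro r ⟨⟨a', b'⟩, hab', rfl⟩
      have h2 : dist x x' - (dist x' a' + ε + dist b' y) ≤ F x y := by
        apply le_csInf (himgne x y)
        rintro r ⟨⟨a, b⟩, hab, rfl⟩
        have hd := hdis2 (a, b) hab (a', b') hab'
        rw [abs_le] at hd
        simp only at hd ⊢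
        have t1 : dist x x' ≤ dist x a + dist a a' + dist a' x' := dist_triangle4 x a a' x'
        have t2 : dist b b' ≤ dist b y + dist y b' := dist_triangle b y b'
        have t3 : dist y b' = dist b' y := dist_comm _ _
        have t4 : dist a' x' = dist x' a' := dist_comm _ _
        linarith [hd.1, hd.2]
      simp only at h2 ⊢
      linarith
    linarith
  have tri4 : ∀ (x : X) (y y' : Y), dist y y' ≤ F x y + F x y' := by
    intro x y y'
    have h : dist y y' - F x y ≤ F x y' := by
      apply le_csInf (himgne x y')
      rintro r ⟨⟨a', b'⟩, hab', rfl⟩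
      have h2 : dist y y' - (dist x a' + ε + dist b' y') ≤ F x y := by
        apply le_csInf (himgne x y)
        rintro r ⟨⟨a, b⟩, hab, rfl⟩
        have hd := hdis2 (a, b) hab (a', b') hab'
        rw [abs_le] at hd
        simp only at hd ⊢
        have t1 : dist y y' ≤ dist y b + dist b b' + dist b' y' := dist_triangle4 y b b' y'
        have t2 : dist a a' ≤ dist a x + dist x a' := dist_triangle a x a'
        have t3 : dist y b = dist b y := dist_comm _ _
        have t4 : dist a x = dist x a := dist_comm _ _
        linarith [hd.1, hd.2]
      simp only at h2 ⊢
      linarith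
    linarith
  set δ : X ⊕ Y → X ⊕ Y → ℝ := fun a b =>
    match a, b with
    | Sum.inl x, Sum.inl x' => dist x x'
    | Sum.inl x, Sum.inr y => F x y
    | Sum.inr y, Sum.inl x => F x y
    | Sum.inr y, Sum.inr y' => dist y y' with hδdef
  have hglue : IsGlueMetric δ := by
    constructor
    · rintro (x | y)
      · exact dist_self x
      · exact dist_self y
    · rintro (x | y) (x' | y') hne
      · exact dist_pos.mpr (fun h => hne (by rw [h]))
      · exact lt_of_lt_of_le hε (hFge x y')
      · exact lt_of_lt_of_le hε (hFge x' y)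
      · exact dist_pos.mpr (fun h => hne (by rw [h]))
    · rintro (x | y) (x' | y')
      · exact dist_comm x x'
      · rfl
      · rfl
      · exact dist_comm y y'
    · rintro (x | y) (x' | y') (x'' | y'')
      · exact dist_triangle x x' x''
      · exact tri1 x x' y''
      · exact tri3 x x'' y'
      · exact tri2 x y'' y'
      · show F x'' y ≤ F x' y + dist x' x''
        have h1 := tri1 x'' x' y
        have h2 := dist_comm x'' x'
        linarith
      · exact tri4 x' y y''
      · show F x'' y ≤ dist y y' + F x'' y'
        have h1 := tri2 x'' y y'
        have h2 := dist_comm y y'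
        linarith
      · exact dist_triangle y y' y''
    · intro x x'
      rfl
    · intro y y'
      rfl
  have hFself : ∀ (x : X) (y : Y), (x, y) ∈ R → F x y ≤ ε := by
    intro x y hxy
    have := hFle x y x y hxy
    simpa using this
  have hH : glueHausdorffDist δ ≤ ε := by
    apply le_of_forall_gt_imp_ge_of_dense
    intro ε' hε'
    apply csInf_le ⟨0, fun r hr => hr.1.le⟩
    refine ⟨lt_trans hε hε', ?_, ?_⟩
    · intro x
      obtain ⟨y, hxy⟩ := hRcorr.1 x
      exact ⟨y, lt_of_le_of_lt (hFself x y hxy) hε'⟩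
    · intro y
      obtain ⟨x, hxy⟩ := hRcorr.2 y
      exact ⟨x, lt_of_le_of_lt (hFself x y hxy) hε'⟩
  haveI hνprob : IsProbabilityMeasure ν := by
    constructor
    have h1 : ν Set.univ = (ν.map Prod.fst) Set.univ := by
      rw [Measure.map_apply measurable_fst MeasurableSet.univ, Set.preimage_univ]
    rw [h1, hcoup.1, measure_univ]
  have hP : glueProkhorovDist δ μ μ' ≤ ε := by
    apply le_of_forall_gt_imp_ge_of_dense
    intro ε' hε'
    apply csInf_le ⟨0, fun r hr => hr.1.le⟩
    refine ⟨lt_trans hε hε', ?_⟩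
    intro C hC
    have hAmeas : MeasurableSet (Sum.inl ⁻¹' C : Set X) := by
      have hopen : IsOpen ((Sum.inl ⁻¹' C : Set X)ᶜ) := by
        rw [Metric.isOpen_iff]
        intro x hx
        obtain ⟨η, hη0, hηb⟩ := hC (Sum.inl x) hx
        refine ⟨η, hη0, ?_⟩
        intro x' hx'
        intro hC'
        have h1 := hηb (Sum.inl x') hC'
        have h2 : δ (Sum.inl x) (Sum.inl x') = dist x x' := hglue.restr_left x x'
        rw [h2] at h1
        rw [Metric.mem_ball, dist_comm] at hx'
        linarith
      exact (isOpen_compl_iff.mp hopen).measurableSet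
    set B : Set Y := Sum.inr ⁻¹' {a | ∃ b ∈ C, δ a b < ε'} with hB
    have hBmeas : MeasurableSet B := by
      have hopen : IsOpen B := by
        rw [Metric.isOpen_iff]
        intro y hy
        obtain ⟨b, hbC, hblt⟩ := hy
        refine ⟨ε' - δ (Sum.inr y) b, by linarith, ?_⟩
        intro y' hy'
        rw [Metric.mem_ball] at hy'
        refine ⟨b, hbC, ?_⟩
        have h1 := hglue.triangle (Sum.inr y') (Sum.inr y) b
        have h2 : δ (Sum.inr y') (Sum.inr y) = dist y' y := hglue.restr_right y' y
        linarith
      exact hopen.measurableSet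
    set s : Set (X × Y) := Prod.fst ⁻¹' (Sum.inl ⁻¹' C) with hs
    have step1 : μ (Sum.inl ⁻¹' C) = ν s := by
      rw [← hcoup.1, Measure.map_apply measurable_fst hAmeas]
    have step2 : ν s = ν (s ∩ R) + ν (s \ R) := (measure_inter_add_diff s hRmeas).symm
    have step3 : ν (s \ R) ≤ ENNReal.ofReal ε := by
      calc ν (s \ R) ≤ ν Rᶜ := measure_mono (fun p hp => hp.2)
        _ ≤ ENNReal.ofReal ε := by
          rw [measure_compl hRmeas (measure_ne_top ν R), measure_univ]
          rw [tsub_le_iff_right]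
          calc (1 : ENNReal) = ENNReal.ofReal (ε + (1 - ε)) := by
                rw [show ε + (1 - ε) = 1 by ring, ENNReal.ofReal_one]
            _ ≤ ENNReal.ofReal ε + ENNReal.ofReal (1 - ε) := ENNReal.ofReal_add_le
            _ ≤ ENNReal.ofReal ε + ν R := add_le_add_right hνR _
    have step4 : ν (s ∩ R) ≤ μ' B := by
      have hsub : s ∩ R ⊆ Prod.snd ⁻¹' B := by
        rintro ⟨x, y⟩ ⟨hxs, hxyR⟩
        refine ⟨Sum.inl x, hxs, ?_⟩
        have h1 : δ (Sum.inr y) (Sum.inl x) = F x y := rfl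
        rw [h1]
        exact lt_of_le_of_lt (hFself x y hxyR) hε'
      calc ν (s ∩ R) ≤ ν (Prod.snd ⁻¹' B) := measure_mono hsub
        _ = μ' B := by rw [← hcoup.2, Measure.map_apply measurable_snd hBmeas]
    calc μ (Sum.inl ⁻¹' C) = ν (s ∩ R) + ν (s \ R) := by rw [step1, step2]
      _ ≤ μ' B + ENNReal.ofReal ε := add_le_add step4 step3
      _ ≤ μ' B + ENNReal.ofReal ε' := add_le_add_right (ENNReal.ofReal_le_ofReal hε'.le) _
  exact ⟨δ, hglue, max_le hH hP⟩

end DirA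

section DirB

open Metric

set_option maxHeartbeats 1000000 in
theorem dirB {X Y : Type*} [MetricSpace X] [MetricSpace Y]
    [CompactSpace X] [CompactSpace Y] [Nonempty X] [Nonempty Y]
    [MeasurableSpace X] [BorelSpace X] [MeasurableSpace Y] [BorelSpace Y]
    (μ : Measure X) (μ' : Measure Y) [IsProbabilityMeasure μ] [IsProbabilityMeasure μ']
    (δ : X ⊕ Y → X ⊕ Y → ℝ) (hδ : IsGlueMetric δ) (t : ℝ)
    (ht : max (glueHausdorffDist δ) (glueProkhorovDist δ μ μ') < t) :
    0 < t ∧ ∃ ν : Measure (X × Y), IsCoupling ν μ μ' ∧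
      ∃ R : Set (X × Y), IsCompact R ∧ IsCorrespondence R ∧
        ENNReal.ofReal (1 - t) ≤ ν R ∧ distortion R / 2 ≤ t := by
  classical
  have hmax0 : 0 ≤ max (glueHausdorffDist δ) (glueProkhorovDist δ μ μ') :=
    le_trans glueHausdorffDist_nonneg (le_max_left _ _)
  have ht0 : 0 < t := lt_of_le_of_lt hmax0 ht
  set r : ℝ := (max (glueHausdorffDist δ) (glueProkhorovDist δ μ μ') + t) / 2 with hr
  have hmr : max (glueHausdorffDist δ) (glueProkhorovDist δ μ μ') < r := by
    rw [hr]; linarith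
  have hrt : r < t := by rw [hr]; linarith
  have hr0 : 0 < r := lt_of_le_of_lt hmax0 hmr
  -- Hausdorff consequences at level r
  have hHr : glueHausdorffDist δ < r := lt_of_le_of_lt (le_max_left _ _) hmr
  obtain ⟨ε₀, hε₀mem, hε₀r⟩ := exists_lt_of_csInf_lt (glueHausdorff_set_nonempty hδ) hHr
  have hH1 : ∀ x : X, ∃ y : Y, δ (Sum.inl x) (Sum.inr y) < r :=
    fun x => (hε₀mem.2.1 x).imp (fun y hy => lt_trans hy hε₀r)
  have hH2 : ∀ y : Y, ∃ x : X, δ (Sum.inl x) (Sum.inr y) < r :=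
    fun y => (hε₀mem.2.2 y).imp (fun x hx => lt_trans hx hε₀r)
  -- Prokhorov consequence at level r
  have hPr : glueProkhorovDist δ μ μ' < r := lt_of_le_of_lt (le_max_right _ _) hmr
  have hPsetne : {ε : ℝ | 0 < ε ∧ ∀ C : Set (X ⊕ Y),
      (∀ a ∉ C, ∃ η > 0, ∀ b ∈ C, η ≤ δ a b) →
      μ (Sum.inl ⁻¹' C) ≤ μ' (Sum.inr ⁻¹' {a | ∃ b ∈ C, δ a b < ε}) + ENNReal.ofReal ε}.Nonempty := by
    refine ⟨2, by norm_num, ?_⟩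
    intro C _
    calc μ (Sum.inl ⁻¹' C) ≤ 1 := prob_le_one
      _ ≤ ENNReal.ofReal 2 := by
          rw [show (2:ℝ) = 1 + 1 by norm_num, ENNReal.ofReal_add one_pos.le one_pos.le,
            ENNReal.ofReal_one]
          exact le_add_self.trans_eq (add_comm _ _)
      _ ≤ _ := le_add_self
  obtain ⟨ε₁, hε₁mem, hε₁r⟩ := exists_lt_of_csInf_lt hPsetne hPr
  have hP : ∀ C : Set (X ⊕ Y), (∀ a ∉ C, ∃ η > 0, ∀ b ∈ C, η ≤ δ a b) →
      μ (Sum.inl ⁻¹' C) ≤ μ' (Sum.inr ⁻¹' {a | ∃ b ∈ C, δ a b < r}) + ENNReal.ofReal r := by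
    intro C hC
    calc μ (Sum.inl ⁻¹' C)
        ≤ μ' (Sum.inr ⁻¹' {a | ∃ b ∈ C, δ a b < ε₁}) + ENNReal.ofReal ε₁ := hε₁mem.2 C hC
      _ ≤ μ' (Sum.inr ⁻¹' {a | ∃ b ∈ C, δ a b < r}) + ENNReal.ofReal r := by
          apply add_le_add
          · apply measure_mono
            intro y hy
            obtain ⟨b, hb, hlt⟩ := hy
            exact ⟨b, hb, lt_trans hlt hε₁r⟩
          · exact ENNReal.ofReal_le_ofReal hε₁r.le
  -- partitions
  set θ : ℝ := (t - r) / 4 with hθ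
  have hθ0 : 0 < θ := by rw [hθ]; linarith
  obtain ⟨n, xc, A, hAm, hAball, hAdisj, hAcov⟩ := exists_fine_partition (Z := X) θ hθ0
  obtain ⟨n', yc, B, hBm, hBball, hBdisj, hBcov⟩ := exists_fine_partition (Z := Y) θ hθ0
  set p : Fin n → ℝ := fun i => (μ (A i)).toReal with hp
  set q : Fin n' → ℝ := fun j => (μ' (B j)).toReal with hq
  set S : Fin n → Fin n' → Prop :=
    fun i j => δ (Sum.inl (xc i)) (Sum.inr (yc j)) ≤ r + 2 * θ with hS
  letI : ∀ i j, Decidable (S i j) := fun i j => Classical.propDecidable _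
  -- discrete hypothesis
  have hdisc : ∀ A' : Finset (Fin n), ∑ i ∈ A', p i ≤
      (∑ j ∈ Finset.univ.filter (fun j => ∃ i ∈ A', S i j), q j) + r := by
    intro A'
    set K : Set X := ⋃ i ∈ A', Metric.closedBall (xc i) θ with hK
    have hKclosed : IsClosed K :=
      Set.Finite.isClosed_biUnion (A' : Set (Fin n)).toFinite
        (fun i _ => Metric.isClosed_closedBall)
    set C : Set (X ⊕ Y) := Sum.inl '' K with hC
    have hCclosed : ∀ a ∉ C, ∃ η > 0, ∀ b ∈ C, η ≤ δ a b := by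
      intro a ha
      rcases K.eq_empty_or_nonempty with hKe | hKne
      · refine ⟨1, one_pos, ?_⟩
        intro b hb
        rw [hC, hKe] at hb
        simp at hb
      · have hKcomp : IsCompact K := hKclosed.isCompact
        obtain ⟨x₁, hx₁K, hmin⟩ := hKcomp.exists_isMinOn hKne
          (hδ.continuous_left a).continuousOn
        have hpos : 0 < δ a (Sum.inl x₁) := by
          apply hδ.pos
          intro heq
          apply ha
          rw [heq]
          exact ⟨x₁, hx₁K, rfl⟩
        refine ⟨δ a (Sum.inl x₁), hpos, ?_⟩
        rintro b ⟨x₂, hx₂K, rfl⟩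
        exact hmin hx₂K
    have hsub1 : (⋃ i ∈ A', A i) ⊆ K := by
      apply Set.iUnion₂_mono
      intro i _
      exact (hAball i).trans Metric.ball_subset_closedBall
    have hE1 : ∑ i ∈ A', μ (A i) ≤ μ (Sum.inl ⁻¹' C) := by
      rw [hC, Set.preimage_image_eq _ Sum.inl_injective]
      calc ∑ i ∈ A', μ (A i) = μ (⋃ i ∈ A', A i) :=
            (measure_biUnion_finset
              (fun i _ j _ hij => hAdisj hij) (fun i _ => hAm i)).symm
        _ ≤ μ K := measure_mono hsub1
    have hE2 : μ' (Sum.inr ⁻¹' {a | ∃ b ∈ C, δ a b < r}) ≤ ∑ j ∈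
        Finset.univ.filter (fun j => ∃ i ∈ A', S i j), μ' (B j) := by
      have hsub2 : (Sum.inr ⁻¹' {a | ∃ b ∈ C, δ a b < r} : Set Y) ⊆
          ⋃ j ∈ Finset.univ.filter (fun j => ∃ i ∈ A', S i j), B j := by
        intro y hy
        obtain ⟨b, hbC, hblt⟩ := hy
        obtain ⟨x₂, hx₂K, rfl⟩ := hbC
        obtain ⟨i, hiK⟩ := Set.mem_iUnion.mp hx₂K
        obtain ⟨hiA', hx₂ball⟩ := Set.mem_iUnion.mp hiK
        obtain ⟨j, hyBj⟩ := Set.mem_iUnion.mp (hBcov ▸ Set.mem_univ y)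
        have hSij : S i j := by
          rw [hS]
          have h1 := hδ.cross_sub_le (xc i) x₂ (yc j) y
          have h2 : δ (Sum.inl x₂) (Sum.inr y) = δ (Sum.inr y) (Sum.inl x₂) := hδ.symm _ _
          have h3 : dist (xc i) x₂ ≤ θ := by
            rw [dist_comm]
            exact Metric.mem_closedBall.mp hx₂ball
          have h4 : dist y (yc j) < θ := Metric.mem_ball.mp (hBball j hyBj)
          simp only
          linarith
        exact Set.mem_biUnion (Finset.mem_filter.mpr ⟨Finset.mem_univ j, ⟨i, hiA', hSij⟩⟩) hyBj
      calc μ' (Sum.inr ⁻¹' {a | ∃ b ∈ C, δ a b < r})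
          ≤ μ' (⋃ j ∈ Finset.univ.filter (fun j => ∃ i ∈ A', S i j), B j) :=
            measure_mono hsub2
        _ = ∑ j ∈ Finset.univ.filter (fun j => ∃ i ∈ A', S i j), μ' (B j) :=
            measure_biUnion_finset (fun i _ j _ hij => hBdisj hij) (fun j _ => hBm j)
    have hE : ∑ i ∈ A', μ (A i) ≤
        (∑ j ∈ Finset.univ.filter (fun j => ∃ i ∈ A', S i j), μ' (B j)) + ENNReal.ofReal r :=
      le_trans hE1 (le_trans (hP C hCclosed) (add_le_add_left hE2 _))
    have hfin : (∑ j ∈ Finset.univ.filter (fun j => ∃ i ∈ A', S i j), μ' (B j))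
        + ENNReal.ofReal r ≠ ⊤ := by
      apply ENNReal.add_ne_top.mpr
      constructor
      · exact (ENNReal.sum_lt_top.mpr (fun j _ => measure_lt_top μ' (B j))).ne
      · exact ENNReal.ofReal_ne_top
    have := ENNReal.toReal_mono hfin hE
    rw [ENNReal.toReal_add (ENNReal.sum_lt_top.mpr (fun j _ => measure_lt_top μ' (B j))).ne
      ENNReal.ofReal_ne_top, ENNReal.toReal_ofReal hr0.le,
      ENNReal.toReal_sum (fun i _ => measure_ne_top μ _),
      ENNReal.toReal_sum (fun j _ => measure_ne_top μ' _)] at this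
    exact this
  -- total mass of p is 1
  have hpsum : ∑ i, p i = 1 := by
    have h1 : ∑ i, μ (A i) = 1 := by
      rw [← tsum_fintype (L := SummationFilter.unconditional _), ← measure_iUnion hAdisj hAm, hAcov, measure_univ]
    rw [hp]
    rw [← ENNReal.toReal_sum (fun i _ => measure_ne_top μ _), h1, ENNReal.toReal_one]
  -- apply discrete Strassen
  obtain ⟨m, hm0, hmrow, hmcol, hmsupp, hmmass⟩ :=
    real_substrassen p q (fun i => ENNReal.toReal_nonneg) (fun j => ENNReal.toReal_nonneg)
      S r hr0.le (by convert hdisc) (t - r) (by linarith)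
  -- the correspondence
  set R : Set (X × Y) := {pq : X × Y | δ (Sum.inl pq.1) (Sum.inr pq.2) ≤ t} with hRdef
  have hRclosed : IsClosed R := isClosed_le hδ.continuous_cross continuous_const
  have hRcomp : IsCompact R := hRclosed.isCompact
  have hRsupp : ∀ i j, m i j ≠ 0 → A i ×ˢ B j ⊆ R := by
    intro i j hmne
    have hSij : S i j := hmsupp i j hmne
    rintro ⟨u, v⟩ ⟨huA, hvB⟩
    have h1 := hδ.cross_sub_le u (xc i) v (yc j)
    have h2 : dist u (xc i) < θ := Metric.mem_ball.mp (hAball i huA)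
    have h3 : dist (yc j) v < θ := by
      rw [dist_comm]
      exact Metric.mem_ball.mp (hBball j hvB)
    have h4 : δ (Sum.inl (xc i)) (Sum.inr (yc j)) ≤ r + 2 * θ := hSij
    show δ (Sum.inl u) (Sum.inr v) ≤ t
    have hteq : r + 4 * θ = t := by rw [hθ]; ring
    linarith
  -- spread
  obtain ⟨ρ, hρ1, hρ2, hρR⟩ := spread_subcoupling μ μ' A B hAm hBm hAdisj hAcov hBdisj hBcov
    m hm0 hmrow hmcol R hRsupp
  obtain ⟨ν, hν1, hν2, hρν⟩ := exists_coupling_ge μ μ' ρ hρ1 hρ2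
  refine ⟨ht0, ν, ⟨hν1, hν2⟩, R, hRcomp, ?_, ?_, ?_⟩
  · constructor
    · intro x
      obtain ⟨y, hy⟩ := hH1 x
      exact ⟨y, le_trans hy.le hrt.le⟩
    · intro y
      obtain ⟨x, hx⟩ := hH2 y
      exact ⟨x, le_trans hx.le hrt.le⟩
  · have hmm2 : 1 - t ≤ ∑ i, ∑ j, m i j := by
      rw [hpsum] at hmmass
      linarith
    calc ENNReal.ofReal (1 - t)
        ≤ ENNReal.ofReal (∑ i, ∑ j, m i j) := ENNReal.ofReal_le_ofReal hmm2
      _ ≤ ρ R := hρR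
      _ ≤ ν R := Measure.le_iff'.mp hρν R
  · rw [div_le_iff₀ (by norm_num : (0:ℝ) < 2)]
    apply Real.sSup_le
    · rintro d ⟨pq, hpq, uv, huv, rfl⟩
      have h1 : δ (Sum.inl pq.1) (Sum.inr pq.2) ≤ t := hpq
      have h2 : δ (Sum.inl uv.1) (Sum.inr uv.2) ≤ t := huv
      have t1 := hδ.triangle (Sum.inl pq.1) (Sum.inr pq.2) (Sum.inl uv.1)
      have t2 := hδ.triangle (Sum.inr pq.2) (Sum.inr uv.2) (Sum.inl uv.1)
      have t3 := hδ.triangle (Sum.inr pq.2) (Sum.inl pq.1) (Sum.inr uv.2)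
      have t4 := hδ.triangle (Sum.inl pq.1) (Sum.inl uv.1) (Sum.inr uv.2)
      have e1 : δ (Sum.inl pq.1) (Sum.inl uv.1) = dist pq.1 uv.1 := hδ.restr_left _ _
      have e2 : δ (Sum.inr pq.2) (Sum.inr uv.2) = dist pq.2 uv.2 := hδ.restr_right _ _
      have s1 : δ (Sum.inr pq.2) (Sum.inl uv.1) = δ (Sum.inl uv.1) (Sum.inr pq.2) := hδ.symm _ _
      have s2 : δ (Sum.inr pq.2) (Sum.inl pq.1) = δ (Sum.inl pq.1) (Sum.inr pq.2) := hδ.symm _ _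
      have s3 : δ (Sum.inr uv.2) (Sum.inl uv.1) = δ (Sum.inl uv.1) (Sum.inr uv.2) := hδ.symm _ _
      rw [abs_le]
      constructor
      · -- dist pq.2 uv.2 - dist pq.1 uv.1 ≤ 2t, i.e. lower bound
        have := hδ.triangle (Sum.inr pq.2) (Sum.inl pq.1) (Sum.inr uv.2)
        have t5 := hδ.triangle (Sum.inl pq.1) (Sum.inl uv.1) (Sum.inr uv.2)
        linarith
      · have t6 := hδ.triangle (Sum.inl pq.1) (Sum.inr pq.2) (Sum.inl uv.1)
        have t7 := hδ.triangle (Sum.inr pq.2) (Sum.inr uv.2) (Sum.inl uv.1)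
        have s4 : δ (Sum.inr uv.2) (Sum.inl uv.1) = δ (Sum.inl uv.1) (Sum.inr uv.2) := hδ.symm _ _
        linarith
    · linarith

end DirB

/-- Characterization of the Gromov–Hausdorff–Prokhorov distance via couplings and
compact correspondences. -/
theorem ghpDist_eq_inf_coupling_correspondence
    {X Y : Type*} [MetricSpace X] [MetricSpace Y]
    [CompactSpace X] [CompactSpace Y] [Nonempty X] [Nonempty Y]
    [MeasurableSpace X] [BorelSpace X] [MeasurableSpace Y] [BorelSpace Y]
    (μ : Measure X) (μ' : Measure Y)
    [IsProbabilityMeasure μ] [IsProbabilityMeasure μ'] :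
    ghpDist μ μ' =
      sInf {ε : ℝ | 0 < ε ∧ ∃ ν : Measure (X × Y), IsCoupling ν μ μ' ∧
        ∃ R : Set (X × Y), IsCompact R ∧ IsCorrespondence R ∧
          ENNReal.ofReal (1 - ε) ≤ ν R ∧ distortion R / 2 ≤ ε} := by
  classical
  set Rset := {ε : ℝ | 0 < ε ∧ ∃ ν : Measure (X × Y), IsCoupling ν μ μ' ∧
    ∃ R : Set (X × Y), IsCompact R ∧ IsCorrespondence R ∧
      ENNReal.ofReal (1 - ε) ≤ ν R ∧ distortion R / 2 ≤ ε} with hRset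
  set L := {r : ℝ | ∃ δ : X ⊕ Y → X ⊕ Y → ℝ, IsGlueMetric δ ∧
    r = max (glueHausdorffDist δ) (glueProkhorovDist δ μ μ')} with hL
  have hdX : 0 ≤ Metric.diam (Set.univ : Set X) := Metric.diam_nonneg
  have hdY : 0 ≤ Metric.diam (Set.univ : Set Y) := Metric.diam_nonneg
  have hRne : Rset.Nonempty := by
    set ε₀ : ℝ := Metric.diam (Set.univ : Set X) + Metric.diam (Set.univ : Set Y) + 1 with hε₀
    refine ⟨ε₀, by rw [hε₀]; linarith, μ.prod μ', ⟨?_, ?_⟩, Set.univ, isCompact_univ,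
      ⟨fun x => ⟨Classical.arbitrary Y, trivial⟩, fun y => ⟨Classical.arbitrary X, trivial⟩⟩,
      ?_, ?_⟩
    · rw [Measure.map_fst_prod, measure_univ, one_smul]
    · rw [Measure.map_snd_prod, measure_univ, one_smul]
    · calc ENNReal.ofReal (1 - ε₀) ≤ 1 := ENNReal.ofReal_le_one.mpr (by rw [hε₀]; linarith)
        _ = (μ.prod μ') Set.univ := measure_univ.symm
    · rw [div_le_iff₀ (by norm_num : (0:ℝ) < 2)]
      apply Real.sSup_le
      · rintro d ⟨p, -, q, -, rfl⟩
        have h1 : dist p.1 q.1 ≤ Metric.diam (Set.univ : Set X) :=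
          Metric.dist_le_diam_of_mem Metric.isBounded_of_compactSpace trivial trivial
        have h2 : dist p.2 q.2 ≤ Metric.diam (Set.univ : Set Y) :=
          Metric.dist_le_diam_of_mem Metric.isBounded_of_compactSpace trivial trivial
        have h3 := dist_nonneg (x := p.1) (y := q.1)
        have h4 := dist_nonneg (x := p.2) (y := q.2)
        rw [abs_le, hε₀]
        constructor <;> linarith
      · rw [hε₀]; linarith
  have hkey : ∀ ε ∈ Rset, ∃ l ∈ L, l ≤ ε := by
    rintro ε ⟨hε, ν, hcoup, R, hRcomp, hRcorr, hνR, hdis⟩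
    obtain ⟨δ, hglue, hle⟩ := dirA μ μ' ε hε ν hcoup R hRcorr hνR
      hRcomp.isClosed.measurableSet hdis
    exact ⟨_, ⟨δ, hglue, rfl⟩, hle⟩
  have hLne : L.Nonempty := by
    obtain ⟨ε, hε⟩ := hRne
    obtain ⟨l, hl, -⟩ := hkey ε hε
    exact ⟨l, hl⟩
  have hLlb : ∀ l ∈ L, (0:ℝ) ≤ l := by
    rintro l ⟨δ, hglue, rfl⟩
    exact le_trans glueHausdorffDist_nonneg (le_max_left _ _)
  apply le_antisymm
  · apply le_csInf hRne
    intro ε hεmem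
    obtain ⟨l, hlL, hlε⟩ := hkey ε hεmem
    exact le_trans (csInf_le ⟨0, hLlb⟩ hlL) hlε
  · apply le_csInf hLne
    rintro l ⟨δ, hglue, rfl⟩
    apply le_of_forall_gt_imp_ge_of_dense
    intro t htgt
    obtain ⟨ht0, ν, hcoup, R, hcomp, hcorr, hνR, hdis⟩ := dirB μ μ' δ hglue t htgt
    exact csInf_le ⟨0, fun ε hε => hε.1.le⟩ ⟨ht0, ν, hcoup, R, hcomp, hcorr, hνR, hdis⟩
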